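/- Let F be a field of characteristic zero and q, p₀ ∈ F with q ≠ 0 and q ≠ 1. Let W_q := F{x,y,z}/(yz − q⁻¹zy, zx − q²xz − p₀²(1+q⁻¹)y − p₀²((q+1)/(q−1))·1, xy − q⁻¹yx). Then W_q has a PBW-basis: the images of the ordered monomials x^i y^j z^k, for (i,j,k) ranging over all triples of non-negative integers, form an F-vector-space basis of W_q. -/

import Mathlib

/-- The defining relations of `W_q`: on the free algebra on generators
`0 ↦ x`, `1 ↦ y`, `2 ↦ z`, we impose `yz = q⁻¹zy`,
`zx = q²xz + p₀²(1+q⁻¹)y + p₀²((q+1)/(q−1))·1`, `xy = q⁻¹yx`. -/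
inductive WqRel (F : Type*) [Field F] (q p₀ : F) :
    FreeAlgebra F (Fin 3) → FreeAlgebra F (Fin 3) → Prop
  | yz : WqRel F q p₀
      (FreeAlgebra.ι F (1 : Fin 3) * FreeAlgebra.ι F (2 : Fin 3))
      (q⁻¹ • (FreeAlgebra.ι F (2 : Fin 3) * FreeAlgebra.ι F (1 : Fin 3)))
  | zx : WqRel F q p₀
      (FreeAlgebra.ι F (2 : Fin 3) * FreeAlgebra.ι F (0 : Fin 3))
      (q ^ 2 • (FreeAlgebra.ι F (0 : Fin 3) * FreeAlgebra.ι F (2 : Fin 3))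
        + (p₀ ^ 2 * (1 + q⁻¹)) • FreeAlgebra.ι F (1 : Fin 3)
        + (p₀ ^ 2 * ((q + 1) / (q - 1))) • (1 : FreeAlgebra F (Fin 3)))
  | xy : WqRel F q p₀
      (FreeAlgebra.ι F (0 : Fin 3) * FreeAlgebra.ι F (1 : Fin 3))
      (q⁻¹ • (FreeAlgebra.ι F (1 : Fin 3) * FreeAlgebra.ι F (0 : Fin 3)))

namespace WqAux

variable {F : Type*} [Field F] (q p₀ : F)

/-- The PBW module: the free `F`-module on triples of naturals. -/
abbrev V (F : Type*) [Field F] := (ℕ × ℕ × ℕ) →₀ F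

/-- Coefficient `B i` in `z x^i = q^{2i} x^i z + B_i x^{i-1} y + C_i x^{i-1}`. -/
noncomputable def Bc : ℕ → F
  | 0 => 0
  | i + 1 => q ^ 2 * Bc i + (p₀ ^ 2 * (1 + q⁻¹)) * q ^ i

/-- Coefficient `C i` in `z x^i = q^{2i} x^i z + B_i x^{i-1} y + C_i x^{i-1}`. -/
noncomputable def Cc : ℕ → F
  | 0 => 0
  | i + 1 => q ^ 2 * Cc i + p₀ ^ 2 * ((q + 1) / (q - 1))

noncomputable def Xop : V F →ₗ[F] V F :=
  Finsupp.lift _ F _ fun p => Finsupp.single (p.1 + 1, p.2.1, p.2.2) 1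

noncomputable def Yop : V F →ₗ[F] V F :=
  Finsupp.lift _ F _ fun p => q ^ p.1 • Finsupp.single (p.1, p.2.1 + 1, p.2.2) 1

noncomputable def Zop : V F →ₗ[F] V F :=
  Finsupp.lift _ F _ fun p =>
    q ^ (2 * p.1 + p.2.1) • Finsupp.single (p.1, p.2.1, p.2.2 + 1) (1 : F)
      + Bc q p₀ p.1 • Finsupp.single (p.1 - 1, p.2.1 + 1, p.2.2) 1
      + Cc q p₀ p.1 • Finsupp.single (p.1 - 1, p.2.1, p.2.2) 1

@[simp] lemma Xop_single (i j k : ℕ) (c : F) :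
    Xop (Finsupp.single (i, j, k) c) = c • Finsupp.single (i + 1, j, k) 1 := by
  simp [Xop, Finsupp.lift_apply, Finsupp.sum_single_index]

@[simp] lemma Yop_single (i j k : ℕ) (c : F) :
    Yop q (Finsupp.single (i, j, k) c) = (c * q ^ i) • Finsupp.single (i, j + 1, k) 1 := by
  simp [Yop, Finsupp.lift_apply, Finsupp.sum_single_index, smul_smul]

@[simp] lemma Zop_single (i j k : ℕ) (c : F) :
    Zop q p₀ (Finsupp.single (i, j, k) c) =
      (c * q ^ (2 * i + j)) • Finsupp.single (i, j, k + 1) 1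
        + (c * Bc q p₀ i) • Finsupp.single (i - 1, j + 1, k) 1
        + (c * Cc q p₀ i) • Finsupp.single (i - 1, j, k) 1 := by
  simp [Zop, Finsupp.lift_apply, Finsupp.sum_single_index, smul_add, smul_smul]

lemma relXY (hq0 : q ≠ 0) :
    (Xop : Module.End F (V F)) * Yop q = q⁻¹ • (Yop q * Xop) := by
  apply Finsupp.lhom_ext
  rintro ⟨i, j, k⟩ c
  rw [eq_comm]
  simp only [Module.End.mul_apply, LinearMap.smul_apply]
  rw [inv_smul_eq_iff₀ hq0]
  simp only [Xop_single, Yop_single, map_smul, smul_smul]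
  module

lemma relYZ (hq0 : q ≠ 0) :
    (Yop q : Module.End F (V F)) * Zop q p₀ = q⁻¹ • (Zop q p₀ * Yop q) := by
  apply Finsupp.lhom_ext
  rintro ⟨i, j, k⟩ c
  rw [eq_comm]
  simp only [Module.End.mul_apply, LinearMap.smul_apply]
  rw [inv_smul_eq_iff₀ hq0]
  rcases i with _ | n
  · simp only [Xop_single, Yop_single, Zop_single, map_add, map_smul, smul_smul, Bc, Cc,
      mul_zero, zero_smul, add_zero, zero_mul, smul_zero]
    module
  · simp only [Xop_single, Yop_single, Zop_single, map_add, map_smul, smul_smul,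
      Nat.add_sub_cancel]
    module

lemma relZX :
    (Zop q p₀ : Module.End F (V F)) * Xop =
      q ^ 2 • ((Xop : Module.End F (V F)) * Zop q p₀) + (p₀ ^ 2 * (1 + q⁻¹)) • Yop q
        + (p₀ ^ 2 * ((q + 1) / (q - 1))) • 1 := by
  apply Finsupp.lhom_ext
  rintro ⟨i, j, k⟩ c
  simp only [Module.End.mul_apply, LinearMap.add_apply, LinearMap.smul_apply, Module.End.one_apply]
  rcases i with _ | n
  · simp only [Xop_single, Yop_single, Zop_single, map_add, map_smul, smul_smul, Bc, Cc,
      mul_zero, zero_smul, add_zero, zero_mul, smul_zero, Nat.zero_sub, zero_add]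
    rw [show (Finsupp.single ((0:ℕ), j, k) c : V F)
        = c • Finsupp.single ((0:ℕ), j, k) (1:F) from by simp]
    module
  · simp only [Xop_single, Yop_single, Zop_single, map_add, map_smul, smul_smul, Bc, Cc,
      Nat.add_sub_cancel]
    rw [show (Finsupp.single ((n+1:ℕ), j, k) c : V F)
        = c • Finsupp.single ((n+1:ℕ), j, k) (1:F) from by simp]
    module

/-- The representation of the free algebra on the PBW module. -/
noncomputable def rho : FreeAlgebra F (Fin 3) →ₐ[F] Module.End F (V F) :=
  FreeAlgebra.lift F ![(Xop : Module.End F (V F)), Yop q, Zop q p₀]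

lemma rho_rel (hq0 : q ≠ 0) :
    ∀ ⦃a b : FreeAlgebra F (Fin 3)⦄, WqRel F q p₀ a b → rho q p₀ a = rho q p₀ b := by
  intro a b h
  cases h with
  | yz => simpa [rho] using relYZ q p₀ hq0
  | zx => simpa [rho] using relZX q p₀
  | xy => simpa [rho] using relXY q hq0

/-- The representation of `W_q` on the PBW module. -/
noncomputable def rho' (hq0 : q ≠ 0) :
    RingQuot (WqRel F q p₀) →ₐ[F] Module.End F (V F) :=
  RingQuot.liftAlgHom F ⟨rho q p₀, rho_rel q p₀ hq0⟩

lemma Zpow_e (k : ℕ) :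
    (Zop q p₀ ^ k) (Finsupp.single ((0:ℕ), (0:ℕ), (0:ℕ)) (1:F))
      = Finsupp.single ((0:ℕ), (0:ℕ), k) 1 := by
  induction k with
  | zero => simp
  | succ k ih =>
      rw [pow_succ', Module.End.mul_apply, ih]
      simp [Bc, Cc]

lemma Ypow_e (j k : ℕ) :
    (Yop q ^ j) (Finsupp.single ((0:ℕ), (0:ℕ), k) (1:F))
      = Finsupp.single ((0:ℕ), j, k) 1 := by
  induction j with
  | zero => simp
  | succ j ih =>
      rw [pow_succ', Module.End.mul_apply, ih]
      simp

lemma Xpow_e (i j k : ℕ) :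
    (Xop ^ i) (Finsupp.single ((0:ℕ), j, k) (1:F))
      = Finsupp.single (i, j, k) 1 := by
  induction i with
  | zero => simp
  | succ i ih =>
      rw [pow_succ', Module.End.mul_apply, ih]
      simp

theorem main (F : Type*) [Field F] (q p₀ : F) (hq0 : q ≠ 0) :
    LinearIndependent F
      (fun p : ℕ × ℕ × ℕ =>
        RingQuot.mkAlgHom F (WqRel F q p₀) (FreeAlgebra.ι F (0 : Fin 3)) ^ p.1 *
        RingQuot.mkAlgHom F (WqRel F q p₀) (FreeAlgebra.ι F (1 : Fin 3)) ^ p.2.1 *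
        RingQuot.mkAlgHom F (WqRel F q p₀) (FreeAlgebra.ι F (2 : Fin 3)) ^ p.2.2) ∧
    Submodule.span F
      (Set.range fun p : ℕ × ℕ × ℕ =>
        RingQuot.mkAlgHom F (WqRel F q p₀) (FreeAlgebra.ι F (0 : Fin 3)) ^ p.1 *
        RingQuot.mkAlgHom F (WqRel F q p₀) (FreeAlgebra.ι F (1 : Fin 3)) ^ p.2.1 *
        RingQuot.mkAlgHom F (WqRel F q p₀) (FreeAlgebra.ι F (2 : Fin 3)) ^ p.2.2) = ⊤ := by
  set x : RingQuot (WqRel F q p₀) :=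
    RingQuot.mkAlgHom F (WqRel F q p₀) (FreeAlgebra.ι F (0 : Fin 3)) with hx
  set y : RingQuot (WqRel F q p₀) :=
    RingQuot.mkAlgHom F (WqRel F q p₀) (FreeAlgebra.ι F (1 : Fin 3)) with hy
  set z : RingQuot (WqRel F q p₀) :=
    RingQuot.mkAlgHom F (WqRel F q p₀) (FreeAlgebra.ι F (2 : Fin 3)) with hz
  have hρx : rho' q p₀ hq0 x = Xop := by
    rw [hx, rho', RingQuot.liftAlgHom_mkAlgHom_apply, rho, FreeAlgebra.lift_ι_apply]
    simp
  have hρy : rho' q p₀ hq0 y = Yop q := by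
    rw [hy, rho', RingQuot.liftAlgHom_mkAlgHom_apply, rho, FreeAlgebra.lift_ι_apply]
    simp
  have hρz : rho' q p₀ hq0 z = Zop q p₀ := by
    rw [hz, rho', RingQuot.liftAlgHom_mkAlgHom_apply, rho, FreeAlgebra.lift_ι_apply]
    simp
  have key : ∀ p : ℕ × ℕ × ℕ,
      rho' q p₀ hq0 (x ^ p.1 * y ^ p.2.1 * z ^ p.2.2)
        (Finsupp.single ((0:ℕ), (0:ℕ), (0:ℕ)) (1:F)) = Finsupp.single p 1 := by
    rintro ⟨i, j, k⟩
    rw [map_mul, map_mul, map_pow, map_pow, map_pow, hρx, hρy, hρz,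
      Module.End.mul_apply, Module.End.mul_apply, Zpow_e, Ypow_e, Xpow_e]
  constructor
  · -- linear independence
    set φ : RingQuot (WqRel F q p₀) →ₗ[F] V F :=
      (LinearMap.applyₗ (Finsupp.single ((0:ℕ), (0:ℕ), (0:ℕ)) (1:F))).comp
        (rho' q p₀ hq0).toLinearMap with hφ
    apply LinearIndependent.of_comp φ
    have hcomp : (⇑φ ∘ fun p : ℕ × ℕ × ℕ => x ^ p.1 * y ^ p.2.1 * z ^ p.2.2)
        = fun p : ℕ × ℕ × ℕ => (Finsupp.single p 1 : V F) := by
      funext p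
      simpa [hφ] using key p
    rw [hcomp]
    have h2 := (Finsupp.basisSingleOne (R := F) (ι := ℕ × ℕ × ℕ)).linearIndependent
    rwa [Finsupp.coe_basisSingleOne] at h2
  · -- spanning
    set S : Submodule F (RingQuot (WqRel F q p₀)) :=
      Submodule.span F
        (Set.range fun p : ℕ × ℕ × ℕ => x ^ p.1 * y ^ p.2.1 * z ^ p.2.2) with hS
    have hv : ∀ i j k : ℕ, x ^ i * y ^ j * z ^ k ∈ S :=
      fun i j k => Submodule.subset_span ⟨(i, j, k), rfl⟩
    -- the defining relations in the quotient
    have hxy : x * y = q⁻¹ • (y * x) := by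
      rw [hx, hy, ← map_mul, ← map_mul, RingQuot.mkAlgHom_rel F WqRel.xy, map_smul]
    have hyz : y * z = q⁻¹ • (z * y) := by
      rw [hy, hz, ← map_mul, ← map_mul, RingQuot.mkAlgHom_rel F WqRel.yz, map_smul]
    have hzx : z * x = q ^ 2 • (x * z) + (p₀ ^ 2 * (1 + q⁻¹)) • y
        + (p₀ ^ 2 * ((q + 1) / (q - 1))) • (1 : RingQuot (WqRel F q p₀)) := by
      rw [hz, hx, ← map_mul, RingQuot.mkAlgHom_rel F WqRel.zx]
      simp only [map_add, map_smul, map_mul, map_one]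
      rfl
    have hyx : y * x = q • (x * y) := by
      rw [hxy, smul_smul, mul_inv_cancel₀ hq0, one_smul]
    have hzy : z * y = q • (y * z) := by
      rw [hyz, smul_smul, mul_inv_cancel₀ hq0, one_smul]
    have hyxi : ∀ i : ℕ, y * x ^ i = q ^ i • (x ^ i * y) := by
      intro i
      induction i with
      | zero => simp
      | succ i ih =>
          rw [pow_succ' x, ← mul_assoc, hyx, smul_mul_assoc, mul_assoc, ih, mul_smul_comm,
            smul_smul, ← pow_succ' q, ← mul_assoc, ← pow_succ' x]
    have hzyj : ∀ j : ℕ, z * y ^ j = q ^ j • (y ^ j * z) := by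
      intro j
      induction j with
      | zero => simp
      | succ j ih =>
          rw [pow_succ' y, ← mul_assoc, hzy, smul_mul_assoc, mul_assoc, ih, mul_smul_comm,
            smul_smul, ← pow_succ' q, ← mul_assoc, ← pow_succ' y]
    have hxS : ∀ w ∈ S, x * w ∈ S := by
      intro w hw
      induction hw using Submodule.span_induction with
      | mem m hm =>
          obtain ⟨⟨i, j, k⟩, rfl⟩ := hm
          have e : x * (x ^ i * y ^ j * z ^ k) = x ^ (i + 1) * y ^ j * z ^ k := by
            rw [pow_succ' x]
            simp only [mul_assoc]
          rw [e]; exact hv _ _ _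
      | zero => simpa using S.zero_mem
      | add u v hu hv ihu ihv => rw [mul_add]; exact S.add_mem ihu ihv
      | smul a u hu ih => rw [mul_smul_comm]; exact S.smul_mem a ih
    have hyS : ∀ w ∈ S, y * w ∈ S := by
      intro w hw
      induction hw using Submodule.span_induction with
      | mem m hm =>
          obtain ⟨⟨i, j, k⟩, rfl⟩ := hm
          have e : y * (x ^ i * y ^ j * z ^ k) = q ^ i • (x ^ i * y ^ (j + 1) * z ^ k) := by
            rw [← mul_assoc, ← mul_assoc, hyxi, smul_mul_assoc, smul_mul_assoc, mul_assoc (x ^ i), ← pow_succ' y]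
          rw [e]; exact S.smul_mem _ (hv _ _ _)
      | zero => simpa using S.zero_mem
      | add u v hu hv ihu ihv => rw [mul_add]; exact S.add_mem ihu ihv
      | smul a u hu ih => rw [mul_smul_comm]; exact S.smul_mem a ih
    have hzv : ∀ i j k : ℕ, z * (x ^ i * y ^ j * z ^ k) ∈ S := by
      intro i
      induction i with
      | zero =>
          intro j k
          have e : z * (x ^ 0 * y ^ j * z ^ k) = q ^ j • (x ^ 0 * y ^ j * z ^ (k + 1)) := by
            simp only [pow_zero, one_mul]
            rw [← mul_assoc, hzyj, smul_mul_assoc, mul_assoc, ← pow_succ' z]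
          rw [e]; exact S.smul_mem _ (hv _ _ _)
      | succ i ih =>
          intro j k
          have e : z * (x ^ (i + 1) * y ^ j * z ^ k)
              = q ^ 2 • (x * (z * (x ^ i * y ^ j * z ^ k)))
                + (p₀ ^ 2 * (1 + q⁻¹)) • (y * (x ^ i * y ^ j * z ^ k))
                + (p₀ ^ 2 * ((q + 1) / (q - 1))) • (x ^ i * y ^ j * z ^ k) := by
            have e1 : z * (x ^ (i + 1) * y ^ j * z ^ k)
                = (z * x) * (x ^ i * y ^ j * z ^ k) := by
              rw [pow_succ' x]
              simp only [mul_assoc]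
            rw [e1, hzx, add_mul, add_mul, smul_mul_assoc, smul_mul_assoc, smul_mul_assoc,
              one_mul, mul_assoc]
          rw [e]
          exact S.add_mem (S.add_mem (S.smul_mem _ (hxS _ (ih j k)))
            (S.smul_mem _ (hyS _ (hv i j k)))) (S.smul_mem _ (hv i j k))
    have hzS : ∀ w ∈ S, z * w ∈ S := by
      intro w hw
      induction hw using Submodule.span_induction with
      | mem m hm =>
          obtain ⟨⟨i, j, k⟩, rfl⟩ := hm
          exact hzv i j k
      | zero => simpa using S.zero_mem
      | add u v hu hv ihu ihv => rw [mul_add]; exact S.add_mem ihu ihv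
      | smul a u hu ih => rw [mul_smul_comm]; exact S.smul_mem a ih
    have hxpow : ∀ (n : ℕ) (w), w ∈ S → x ^ n * w ∈ S := by
      intro n
      induction n with
      | zero => intro w hw; simpa using hw
      | succ n ih =>
          intro w hw
          rw [pow_succ' x, mul_assoc]
          exact hxS _ (ih _ hw)
    have hypow : ∀ (n : ℕ) (w), w ∈ S → y ^ n * w ∈ S := by
      intro n
      induction n with
      | zero => intro w hw; simpa using hw
      | succ n ih =>
          intro w hw
          rw [pow_succ' y, mul_assoc]
          exact hyS _ (ih _ hw)
    have hzpow : ∀ (n : ℕ) (w), w ∈ S → z ^ n * w ∈ S := by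
      intro n
      induction n with
      | zero => intro w hw; simpa using hw
      | succ n ih =>
          intro w hw
          rw [pow_succ' z, mul_assoc]
          exact hzS _ (ih _ hw)
    have hmul : ∀ u v : RingQuot (WqRel F q p₀), u ∈ S → v ∈ S → u * v ∈ S := by
      intro u v hu hvv
      induction hu using Submodule.span_induction with
      | mem m hm =>
          obtain ⟨⟨i, j, k⟩, rfl⟩ := hm
          have e : x ^ i * y ^ j * z ^ k * v = x ^ i * (y ^ j * (z ^ k * v)) := by
            simp only [mul_assoc]
          rw [e]
          exact hxpow i _ (hypow j _ (hzpow k _ hvv))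
      | zero => simpa using S.zero_mem
      | add u₁ u₂ h₁ h₂ ih₁ ih₂ => rw [add_mul]; exact S.add_mem ih₁ ih₂
      | smul a u₁ h₁ ih => rw [smul_mul_assoc]; exact S.smul_mem a ih
    have h1S : (1 : RingQuot (WqRel F q p₀)) ∈ S := by
      have := hv 0 0 0
      simpa using this
    have hmaple : Subalgebra.map (RingQuot.mkAlgHom F (WqRel F q p₀)) ⊤
        ≤ S.toSubalgebra h1S hmul := by
      rw [← FreeAlgebra.adjoin_range_ι F (Fin 3), AlgHom.map_adjoin]
      apply Algebra.adjoin_le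
      rintro w ⟨-, ⟨i, rfl⟩, rfl⟩
      rw [SetLike.mem_coe, Submodule.mem_toSubalgebra]
      fin_cases i
      · show x ∈ S
        have := hv 1 0 0
        simpa using this
      · show y ∈ S
        have := hv 0 1 0
        simpa using this
      · show z ∈ S
        have := hv 0 0 1
        simpa using this
    rw [eq_top_iff]
    rintro w -
    obtain ⟨a, rfl⟩ := RingQuot.mkAlgHom_surjective F (WqRel F q p₀) w
    have hmem : RingQuot.mkAlgHom F (WqRel F q p₀) a
        ∈ Subalgebra.map (RingQuot.mkAlgHom F (WqRel F q p₀)) ⊤ := ⟨a, trivial, rfl⟩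
    exact Submodule.mem_toSubalgebra.mp (hmaple hmem)

end WqAux

/-- `W_q` has a PBW-basis: the ordered monomials `x^i y^j z^k` form an
`F`-vector-space basis of `W_q` (they are linearly independent and span). -/
theorem Wq_PBW_basis
    (F : Type*) [Field F] [CharZero F] (q p₀ : F) (hq0 : q ≠ 0) (hq1 : q ≠ 1) :
    let x : RingQuot (WqRel F q p₀) :=
      RingQuot.mkAlgHom F (WqRel F q p₀) (FreeAlgebra.ι F (0 : Fin 3))
    let y : RingQuot (WqRel F q p₀) :=
      RingQuot.mkAlgHom F (WqRel F q p₀) (FreeAlgebra.ι F (1 : Fin 3))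
    let z : RingQuot (WqRel F q p₀) :=
      RingQuot.mkAlgHom F (WqRel F q p₀) (FreeAlgebra.ι F (2 : Fin 3))
    LinearIndependent F
      (fun p : ℕ × ℕ × ℕ => x ^ p.1 * y ^ p.2.1 * z ^ p.2.2) ∧
    Submodule.span F
      (Set.range fun p : ℕ × ℕ × ℕ => x ^ p.1 * y ^ p.2.1 * z ^ p.2.2) = ⊤ := by
  intro x y z
  exact WqAux.main F q p₀ hq0
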